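/- (Theorem B.3) Let λ ∈ (0, 1), let (Ω, P) be a probability space, and let (μ̂_n)_{n≥1} be a sequence of integrable real random variables on Ω with E[μ̂_k] = μ_k for each k ≥ 1, where (μ_k)_{k≥1} are real numbers. Define the random sequences κ₀ = 0, p̃₀ = 0, κ_{n+1} = λ · κ_n + 1, and p̃_{n+1} = p̃_n + (μ̂_{n+1} − p̃_n) / κ_{n+1}. Then for every n ≥ 1, p̃_n is integrable and E[p̃_n] = (Σ_{m=0}^{n-1} λ^m · μ_{n-m}) / (Σ_{m=0}^{n-1} λ^m). -/
import Mathlib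


open MeasureTheory

/-- Theorem B.3: under the TDClip recursion driven by integrable random batch
estimates `μ̂_k` with `E[μ̂_k] = μ_k`, each `p̃_n` (for `n ≥ 1`) is integrable and
`E[p̃_n] = (∑_{m=0}^{n-1} λ^m · μ_{n-m}) / (∑_{m=0}^{n-1} λ^m)`. -/
theorem ptilde_expectation {Ω : Type*} [MeasurableSpace Ω]
    (P : Measure Ω) [IsProbabilityMeasure P]
    (l : ℝ) (hl0 : 0 < l) (hl1 : l < 1)
    (μhat : ℕ → Ω → ℝ) (μs : ℕ → ℝ)
    (hint : ∀ k, 1 ≤ k → Integrable (μhat k) P)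
    (hmean : ∀ k, 1 ≤ k → (∫ ω, μhat k ω ∂P) = μs k)
    (κ : ℕ → ℝ) (p : ℕ → Ω → ℝ)
    (hκ0 : κ 0 = 0) (hκ : ∀ n, κ (n + 1) = l * κ n + 1)
    (hp0 : ∀ ω, p 0 ω = 0)
    (hp : ∀ n ω, p (n + 1) ω = p n ω + (μhat (n + 1) ω - p n ω) / κ (n + 1)) :
    ∀ n, 1 ≤ n → Integrable (p n) P ∧
      (∫ ω, p n ω ∂P) = (∑ m ∈ Finset.range n, l ^ m * μs (n - m)) /
        (∑ m ∈ Finset.range n, l ^ m) := by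
  have hκsum : ∀ n, κ n = ∑ m ∈ Finset.range n, l ^ m := by
    intro n
    induction n with
    | zero => simpa using hκ0
    | succ n ih =>
      rw [hκ n, ih, Finset.sum_range_succ', Finset.mul_sum]
      simp [pow_succ, mul_comm]
  have hκpos : ∀ n, 1 ≤ n → 0 < κ n := by
    intro n hn
    rw [hκsum]
    apply Finset.sum_pos
    · intro i _; positivity
    · exact Finset.nonempty_range_iff.mpr (by omega)
  have key : ∀ n ω, κ n * p n ω = ∑ m ∈ Finset.range n, l ^ m * μhat (n - m) ω := by
    intro n
    induction n with
    | zero => intro ω; simp [hκ0]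
    | succ n ih =>
      intro ω
      have hne : κ (n + 1) ≠ 0 := (hκpos (n + 1) (by omega)).ne'
      have h1 : κ (n + 1) * p (n + 1) ω = l * (κ n * p n ω) + μhat (n + 1) ω := by
        rw [hp n ω, mul_add, mul_div_cancel₀ _ hne, hκ n]; ring
      rw [h1, ih, Finset.sum_range_succ', Finset.mul_sum]
      simp [pow_succ, mul_comm, mul_assoc, mul_left_comm]
  intro n hn
  have hne : κ n ≠ 0 := (hκpos n hn).ne'
  have hpne : p n = fun ω => (∑ m ∈ Finset.range n, l ^ m * μhat (n - m) ω) / κ n := by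
    funext ω
    rw [← key n ω, mul_comm, mul_div_cancel_right₀ _ hne]
  have hintsum : ∀ m ∈ Finset.range n, Integrable (fun ω => l ^ m * μhat (n - m) ω) P := by
    intro m hm
    exact ((hint (n - m) (by simp at hm; omega)).const_mul _)
  constructor
  · rw [hpne]
    exact (integrable_finset_sum _ hintsum).div_const _
  · rw [hpne]
    simp only [integral_div, integral_finset_sum _ hintsum]
    rw [hκsum]
    congr 1
    apply Finset.sum_congr rfl
    intro m hm
    rw [MeasureTheory.integral_const_mul, hmean (n - m) (by simp at hm; omega)]
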